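/- Suppose f_{α,γ}(λ,∂) ∈ ℂ[λ,∂] (α, γ ∈ Δ) satisfies the intermediate-series equation, every f_{α,γ} is nonzero, and every f_{β,γ} has degree at most 1 in ∂ (equivalently, no f_{β,γ} is of Form (III) or Form (IV)). Then there exist constants c, e ∈ ℂ and nonzero constants c_{β,γ} ∈ ℂ (β, γ ∈ Δ) satisfying c_{α+β,γ} = ((α+β+b)/((α+b)(β+b))) c_{β,γ} c_{α,β+γ} for all α, β, γ ∈ Δ, such that for all β, γ ∈ Δ: f_{β,γ}(λ,∂) = c_{β,γ}(∂ + (b/(β+b))(e + (β+γ)/b)λ + c − φ(β+γ)/b + (φ(β)/(β+b))(e + (β+γ)/b)). -/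

import Mathlib

/-- Evaluation of a two-variable polynomial `P(λ,∂) ∈ ℂ[λ,∂]` at `λ = l`, `∂ = d`. -/
noncomputable def ev2 (P : MvPolynomial (Fin 2) ℂ) (l d : ℂ) : ℂ :=
  MvPolynomial.eval ![l, d] P

/-- `B(α,β) = (1/b)(φ(α)β − φ(β)α + b(φ(α) − φ(β)))`. -/
noncomputable def Bc (b : ℂ) {Δ : AddSubgroup ℂ} (φ : Δ →+ ℂ) (α β : Δ) : ℂ :=
  (1 / b) * (φ α * (β : ℂ) - φ β * (α : ℂ) + b * (φ α - φ β))

/-- The intermediate-series equation for a family `f_{α,γ}(λ,∂) ∈ ℂ[λ,∂]`: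
`((β+b)λ − (α+b)μ + B(α,β)) f_{α+β,γ}(λ+μ,∂)
  = f_{β,γ}(μ,λ+∂) f_{α,β+γ}(λ,∂) − f_{α,γ}(λ,μ+∂) f_{β,α+γ}(μ,∂)`
for all `α, β, γ ∈ Δ` (an identity in `ℂ[λ,μ,∂]`, stated via evaluation at all complex
points `l, m, d`).  Equivalently, `V = ⊕_{γ∈Δ} ℂ[∂]M_γ` with
`x_α λ M_γ = f_{α,γ}(λ,∂) M_{α+γ}` is a free intermediate series module over
`CL(b,φ)`. -/
def ISE (Δ : AddSubgroup ℂ) (b : ℂ) (φ : Δ →+ ℂ)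
    (f : Δ → Δ → MvPolynomial (Fin 2) ℂ) : Prop :=
  ∀ α β γ : Δ, ∀ l m d : ℂ,
    (((β : ℂ) + b) * l - ((α : ℂ) + b) * m + Bc b φ α β)
        * ev2 (f (α + β) γ) (l + m) d
      = ev2 (f β γ) m (l + d) * ev2 (f α (β + γ)) l d
        - ev2 (f α γ) l (m + d) * ev2 (f β (α + γ)) m d

open Polynomial

section StmtAux

lemma stmtaux_poly_ext {p q : Polynomial ℂ} {s : Set ℂ} (hs : s.Finite)
    (h : ∀ x ∉ s, p.eval x = q.eval x) : ∀ x, p.eval x = q.eval x := by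
  have hpq : p - q = 0 := by
    apply Polynomial.eq_zero_of_infinite_isRoot
    apply Set.Infinite.mono _ hs.infinite_compl
    intro x hx
    simpa [Polynomial.IsRoot, sub_eq_zero] using h x hx
  have hpq2 : p = q := sub_eq_zero.mp hpq
  intro x; rw [hpq2]

lemma stmtaux_polyzero {p : Polynomial ℂ} (h : ∀ x, p.eval x = 0) : p = 0 :=
  Polynomial.funext (fun r => by simpa using h r)

lemma stmtaux_affine_eval {p : Polynomial ℂ} (h : p.natDegree ≤ 1) (x : ℂ) :
    p.eval x = (p.eval 1 - p.eval 0) * x + p.eval 0 := by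
  obtain ⟨a, c, rfl⟩ := Polynomial.exists_eq_X_add_C_of_natDegree_le_one h
  simp only [eval_add, eval_mul, eval_C, eval_X]
  ring

lemma stmtaux_eval_aeval_pair (g0 g1 : Polynomial ℂ) (p : MvPolynomial (Fin 2) ℂ) (x : ℂ) :
    Polynomial.eval x (MvPolynomial.aeval ![g0, g1] p)
      = MvPolynomial.eval ![Polynomial.eval x g0, Polynomial.eval x g1] p := by
  induction p using MvPolynomial.induction_on with
  | C a => simp
  | add p q hp hq => simp [hp, hq]
  | mul_X p i hp => fin_cases i <;> simp [hp]

lemma stmtaux_natDegree_aeval_le (p : MvPolynomial (Fin 2) ℂ) (hp : p.degreeOf 1 ≤ 1) (l : ℂ) :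
    (MvPolynomial.aeval ![Polynomial.C l, Polynomial.X] p).natDegree ≤ 1 := by
  rw [MvPolynomial.aeval_def, MvPolynomial.eval₂_eq']
  apply Polynomial.natDegree_sum_le_of_forall_le
  intro e he
  have h1 : e 1 ≤ 1 := MvPolynomial.degreeOf_le_iff.mp hp e he
  calc (algebraMap ℂ ℂ[X] (MvPolynomial.coeff e p) * ∏ i, (![C l, X] i) ^ e i).natDegree
      ≤ (∏ i, (![(C l : ℂ[X]), X] i) ^ e i).natDegree := by
        rw [Polynomial.algebraMap_eq]; exact Polynomial.natDegree_C_mul_le _ _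
    _ ≤ 1 := by
        rw [Fin.prod_univ_two]
        simp only [Matrix.cons_val_zero, Matrix.cons_val_one, Matrix.head_cons]
        rw [← Polynomial.C_pow]
        calc ((C (l^(e 0)) : ℂ[X]) * X ^ (e 1)).natDegree
            ≤ (X ^ (e 1) : ℂ[X]).natDegree := natDegree_C_mul_le _ _
          _ = e 1 := natDegree_X_pow _
          _ ≤ 1 := h1

lemma stmtaux_rep_exists (p : MvPolynomial (Fin 2) ℂ) (hp : p.degreeOf 1 ≤ 1) :
    ∃ P Q : Polynomial ℂ, ∀ l d : ℂ, ev2 p l d = P.eval l * d + Q.eval l := by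
  refine ⟨MvPolynomial.aeval ![X, C 1] p - MvPolynomial.aeval ![X, C 0] p,
    MvPolynomial.aeval ![X, C 0] p, fun l d => ?_⟩
  have key : ∀ d : ℂ, ev2 p l d = Polynomial.eval d (MvPolynomial.aeval ![C l, X] p) := by
    intro d; rw [stmtaux_eval_aeval_pair]; simp [ev2]
  rw [key d, stmtaux_affine_eval (stmtaux_natDegree_aeval_le p hp l), ← key 1, ← key 0]
  simp [stmtaux_eval_aeval_pair, ev2]

lemma stmtaux_ev2_zero (p : MvPolynomial (Fin 2) ℂ) (h : ∀ l d, ev2 p l d = 0) : p = 0 := by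
  apply MvPolynomial.funext; intro x
  have h2 := h (x 0) (x 1)
  have hx : ![x 0, x 1] = x := by funext i; fin_cases i <;> rfl
  simpa [ev2, hx] using h2

lemma stmtaux_key1 {bb c s t : ℂ} (hc : c ≠ 0) (hbb : bb ≠ 0) {u : Polynomial ℂ} (hu : u ≠ 0)
    (h : ∀ l m : ℂ, (c*l - bb*m - t) * u.eval (l+m) = u.eval m * (s*l - bb*m - t)) :
    s = c ∧ ∀ x, u.eval x = u.eval 0 := by
  have hfin : ({x : ℂ | u.IsRoot x} ∪ {x : ℂ | bb * x + t = 0}).Finite := by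
    apply Set.Finite.union (Polynomial.finite_setOf_isRoot hu)
    apply Set.Finite.subset (Set.finite_singleton (-(t/bb)))
    intro x hx
    simp only [Set.mem_setOf_eq] at hx
    simp only [Set.mem_singleton_iff]
    field_simp
    linear_combination hx
  obtain ⟨m₀, hm₀⟩ := hfin.infinite_compl.nonempty
  simp only [Set.mem_compl_iff, Set.mem_union, Set.mem_setOf_eq, not_or] at hm₀
  obtain ⟨hroot, hbt⟩ := hm₀
  have hsc : s = c := by
    have h0 := h ((bb*m₀ + t)/c) m₀
    have hl : c*((bb*m₀ + t)/c) - bb*m₀ - t = 0 := by field_simp; ring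
    rw [hl, zero_mul] at h0
    rcases mul_eq_zero.mp h0.symm with h1 | h2
    · exact absurd h1 hroot
    · have h3 : s * (bb*m₀ + t) = c * (bb*m₀ + t) := by
        field_simp at h2
        linear_combination h2
      exact mul_right_cancel₀ hbt h3
  refine ⟨hsc, ?_⟩
  have hext : ∀ x ∉ ({t/c} : Set ℂ), u.eval x = (C (u.eval 0)).eval x := by
    intro x hx
    have h0 := h x 0
    rw [hsc] at h0
    have hne : c*x - t ≠ 0 := by
      intro hcx
      apply hx
      simp only [Set.mem_singleton_iff]
      field_simp
      linear_combination hcx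
    have h4 : (c*x - t) * (u.eval (x+0) - u.eval 0) = 0 := by
      ring_nf; ring_nf at h0; linear_combination h0
    rcases mul_eq_zero.mp h4 with h1 | h2
    · exact absurd h1 hne
    · simpa using sub_eq_zero.mp h2
  have h5 := stmtaux_poly_ext (Set.finite_singleton _) hext
  intro x; simpa using h5 x

lemma stmtaux_step5core (b : ℂ) (hb0 : b ≠ 0) (a w : Polynomial ℂ)
    (hne : a ≠ 0 ∨ w ≠ 0)
    (h00 : ∀ l m d : ℂ,
      (b*l - b*m) * (a.eval (l+m) * d + w.eval (l+m))
        = (a.eval m * (l+d) + w.eval m) * (a.eval l * d + w.eval l)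
          - (a.eval l * (m+d) + w.eval l) * (a.eval m * d + w.eval m)) :
    (∀ x, a.eval x = b) ∧
      (∀ x, w.eval x = (w.eval 1 - w.eval 0) * x + w.eval 0) := by
  have hC1 : ∀ l m : ℂ, b*(l-m) * a.eval (l+m) = (l-m) * (a.eval l * a.eval m) := by
    intro l m
    linear_combination (h00 l m 1) - (h00 l m 0)
  have hC0 : ∀ l m : ℂ, b*(l-m) * w.eval (l+m)
      = l * (a.eval m * w.eval l) - m * (a.eval l * w.eval m) := by
    intro l m
    linear_combination h00 l m 0
  have hC1' : ∀ m l : ℂ, b * a.eval (l+m) = a.eval l * a.eval m := by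
    intro m
    have hp := stmtaux_poly_ext (p := C b * a.comp (X + C m)) (q := a * C (a.eval m))
      (s := {m}) (Set.finite_singleton m) ?_
    · intro l
      have h2 := hp l
      simpa [Polynomial.eval_comp] using h2
    · intro l hl
      have hlm : l - m ≠ 0 := sub_ne_zero.mpr (by simpa using hl)
      have h2 := hC1 l m
      have h3 : (l-m) * (b * a.eval (l+m)) = (l-m) * (a.eval l * a.eval m) := by
        linear_combination h2
      have h4 := mul_left_cancel₀ hlm h3
      simpa [Polynomial.eval_comp] using h4
  have ha : a ≠ 0 := by
    rcases hne with ha | hw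
    · exact ha
    · intro ha0
      apply hw
      have hwz : ∀ x : ℂ, x ≠ 0 → w.eval x = 0 := by
        intro x hx
        have h5 := hC0 x 0
        rw [ha0] at h5
        simp only [add_zero, sub_zero, Polynomial.eval_zero] at h5
        have h6 : b * x * w.eval x = 0 := by linear_combination h5
        rcases mul_eq_zero.mp h6 with h | h
        · rcases mul_eq_zero.mp h with h | h
          · exact absurd h hb0
          · exact absurd h hx
        · exact h
      have hwx := stmtaux_poly_ext (p := w) (q := 0) (s := {0}) (Set.finite_singleton 0)
        (fun x hx => by simpa using hwz x (by simpa using hx))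
      apply Polynomial.funext
      intro x
      simpa using hwx x
  have hnoroot : ∀ z : ℂ, a.eval z ≠ 0 := by
    intro z hz
    apply ha
    apply Polynomial.funext
    intro x
    have h7 := hC1' (x - z) z
    rw [hz, zero_mul] at h7
    rw [show z + (x - z) = x by ring] at h7
    rcases mul_eq_zero.mp h7 with h | h
    · exact absurd h hb0
    · simp [h]
  have hdeg0 : a.natDegree = 0 := by
    by_contra hd
    have hpos : 0 < a.degree := Polynomial.natDegree_pos_iff_degree_pos.mp (Nat.pos_of_ne_zero hd)
    obtain ⟨z, hz⟩ := Complex.exists_root hpos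
    exact hnoroot z hz
  obtain ⟨ca, hca⟩ := Polynomial.natDegree_eq_zero.mp hdeg0
  have haev : ∀ x : ℂ, a.eval x = b := by
    have hca0 : ca = b := by
      have h8 := hC1' 0 0
      rw [← hca] at h8
      simp only [Polynomial.eval_C] at h8
      have hcane : ca ≠ 0 := by
        intro h; apply hnoroot 0; rw [← hca]; simpa using h
      have h10 : b * ca = ca * ca := by linear_combination h8
      exact (mul_right_cancel₀ hcane h10).symm
    intro x; rw [← hca, Polynomial.eval_C, hca0]
  refine ⟨haev, ?_⟩
  have hI : ∀ l m : ℂ, (l-m) * w.eval (l+m) = l * w.eval l - m * w.eval m := by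
    intro l m
    have h9 := hC0 l m
    rw [haev l, haev m] at h9
    exact mul_left_cancel₀ hb0 (by linear_combination h9)
  have haffne : ∀ x : ℂ, x ≠ 0 → w.eval x = (w.eval 1 - w.eval 0) * x + w.eval 0 := by
    intro x hx
    have e1 := hI x 1
    have e2 := hI (x+1) (-x)
    rw [show x + 1 + -x = (1:ℂ) by ring] at e2
    have e3 := hI x (-x)
    rw [show x + -x = (0:ℂ) by ring] at e3
    have h2x : 2*x*(w.eval x) = 2*x*((w.eval 1 - w.eval 0)*x + w.eval 0) := by
      linear_combination -((x+1)*e1) - (x-1)*e2 + (x-1)*e3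
    exact mul_left_cancel₀ (mul_ne_zero two_ne_zero hx) h2x
  have hfin := stmtaux_poly_ext (p := w) (q := C (w.eval 1 - w.eval 0) * X + C (w.eval 0))
    (s := {0}) (Set.finite_singleton 0)
    (fun x hx => by simpa using haffne x (by simpa using hx))
  intro x
  simpa using hfin x

lemma stmtaux_step8core (b βc fβ A p' q' : ℂ) (hβb : βc + b ≠ 0) (Q : Polynomial ℂ)
    (hm0 : ∀ l : ℂ, ((βc+b)*l - fβ) * Q.eval l
      = A * l * (p'*l + q') + Q.eval 0 * (βc*l - fβ)) :
    (∀ x, Q.eval x = (Q.eval 1 - Q.eval 0)*x + Q.eval 0) ∧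
    (βc+b) * (Q.eval 1 - Q.eval 0) = A * p' ∧
    b * Q.eval 0 = A * q' + fβ * (Q.eval 1 - Q.eval 0) := by
  have hpoly : (C (βc+b) * X + C (-fβ)) * Q
      = C (A*p') * X^2 + C (A*q' + Q.eval 0 * βc) * X + C (-(Q.eval 0 * fβ)) := by
    apply Polynomial.funext; intro x
    simp only [eval_mul, eval_add, eval_sub, eval_C, eval_X, eval_pow]
    linear_combination hm0 x
  have hdg : Q.natDegree ≤ 1 := by
    rcases eq_or_ne Q 0 with h | h
    · simp [h]
    · have hLdeg : (C (βc+b) * X + C (-fβ)).natDegree = 1 := natDegree_linear hβb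
      have hL0 : (C (βc+b) * X + C (-fβ)) ≠ 0 := by
        intro h0; rw [h0] at hLdeg; simp at hLdeg
      have hmul := Polynomial.natDegree_mul hL0 h
      rw [hpoly, hLdeg] at hmul
      have hub : (C (A*p') * X^2 + C (A*q' + Q.eval 0 * βc) * X
          + C (-(Q.eval 0 * fβ))).natDegree ≤ 2 := by
        apply le_trans (natDegree_add_le _ _)
        apply max_le
        · apply le_trans (natDegree_add_le _ _)
          apply max_le
          · exact le_trans (natDegree_C_mul_le _ _) (by simp)
          · exact le_trans (natDegree_C_mul_le _ _) (by simp)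
        · exact (natDegree_C _).le.trans (by norm_num)
      omega
  have haff := fun x => stmtaux_affine_eval hdg x
  have hm2 : ∀ l : ℂ, ((βc+b)*l - fβ) * ((Q.eval 1 - Q.eval 0)*l + Q.eval 0)
      = A * l * (p'*l + q') + Q.eval 0 * (βc*l - fβ) := by
    intro l
    have h2 := hm0 l
    rw [haff l] at h2
    exact h2
  refine ⟨haff, ?_, ?_⟩
  · linear_combination (hm2 2 + hm2 0 - 2*(hm2 1))/2
  · linear_combination (4*(hm2 1) - hm2 2 - 3*(hm2 0))/2

end StmtAux

/-- If a family satisfying the intermediate-series equation has all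
members nonzero and every member has degree at most 1 in `∂` (equivalently, no member
is of Form (III) or Form (IV)), then there are constants `c, e ∈ ℂ` and nonzero
constants `c_{β,γ}` with `c_{α+β,γ} = ((α+β+b)/((α+b)(β+b))) c_{β,γ} c_{α,β+γ}`
such that `f_{β,γ}(λ,∂) = c_{β,γ}(∂ + (b/(β+b))(e + (β+γ)/b)λ + c − φ(β+γ)/b
+ (φ(β)/(β+b))(e + (β+γ)/b))` for all `β, γ ∈ Δ`. -/
theorem stmt18 (Δ : AddSubgroup ℂ) (hΔinf : (Δ : Set ℂ).Infinite)
    (b : ℂ) (hb : 2 * b ∉ Δ) (φ : Δ →+ ℂ)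
    (f : Δ → Δ → MvPolynomial (Fin 2) ℂ) (hf : ISE Δ b φ f)
    (hnz : ∀ α γ : Δ, f α γ ≠ 0)
    (hdeg : ∀ β γ : Δ, MvPolynomial.degreeOf 1 (f β γ) ≤ 1) :
    ∃ c e : ℂ, ∃ cc : Δ → Δ → ℂ,
      (∀ β γ : Δ, cc β γ ≠ 0) ∧
      (∀ α β γ : Δ,
        cc (α + β) γ
          = (((α : ℂ) + (β : ℂ) + b) / (((α : ℂ) + b) * ((β : ℂ) + b)))
              * cc β γ * cc α (β + γ)) ∧
      (∀ β γ : Δ, ∀ l d : ℂ,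
        ev2 (f β γ) l d
          = cc β γ * (d + (b / ((β : ℂ) + b)) * (e + ((β : ℂ) + (γ : ℂ)) / b) * l
              + c - φ (β + γ) / b
              + (φ β / ((β : ℂ) + b)) * (e + ((β : ℂ) + (γ : ℂ)) / b))) := by
  classical
  have hb0 : b ≠ 0 := by
    intro h
    exact hb (by rw [h, mul_zero]; exact Δ.zero_mem)
  have hβb : ∀ β : Δ, (β : ℂ) + b ≠ 0 := by
    intro β h
    apply hb
    have hbΔ : b ∈ Δ := by
      have h2 : b = -(β : ℂ) := by linear_combination h
      rw [h2]; exact Δ.neg_mem β.2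
    rw [two_mul]; exact Δ.add_mem hbΔ hbΔ
  have hBc00 : Bc b φ 0 0 = 0 := by simp [Bc]
  have hBc0 : ∀ β : Δ, Bc b φ 0 β = -φ β := by
    intro β
    simp only [Bc, map_zero, ZeroMemClass.coe_zero]
    field_simp
    ring
  choose P Q hPQ using fun β γ : Δ => stmtaux_rep_exists (f β γ) (hdeg β γ)
  have hne : ∀ β γ : Δ, ¬(P β γ = 0 ∧ Q β γ = 0) := by
    rintro β γ ⟨h1, h2⟩
    apply hnz β γ
    apply stmtaux_ev2_zero
    intro l d
    rw [hPQ β γ l d, h1, h2]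
    simp
  have H : ∀ α β γ : Δ, ∀ l m d : ℂ,
      (((β : ℂ) + b) * l - ((α : ℂ) + b) * m + Bc b φ α β)
          * ((P (α+β) γ).eval (l+m) * d + (Q (α+β) γ).eval (l+m))
        = ((P β γ).eval m * (l+d) + (Q β γ).eval m)
            * ((P α (β+γ)).eval l * d + (Q α (β+γ)).eval l)
          - ((P α γ).eval l * (m+d) + (Q α γ).eval l)
            * ((P β (α+γ)).eval m * d + (Q β (α+γ)).eval m) := by
    intro α β γ l m d
    have h := hf α β γ l m d
    simp only [hPQ] at h
    exact h
  -- Step 5 : structure of f_{0,γ}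
  have step5 : ∀ γ : Δ, (∀ x, (P 0 γ).eval x = b) ∧
      (∀ x, (Q 0 γ).eval x = ((Q 0 γ).eval 1 - (Q 0 γ).eval 0) * x + (Q 0 γ).eval 0) := by
    intro γ
    apply stmtaux_step5core b hb0 _ _ (not_and_or.mp (hne 0 γ))
    intro l m d
    have h := H 0 0 γ l m d
    simp only [zero_add, add_zero, hBc00, ZeroMemClass.coe_zero] at h
    linear_combination h
  obtain ⟨pp, qq, hP0, hQ0⟩ : ∃ pp qq : Δ → ℂ,
      (∀ (δ : Δ) (x : ℂ), (P 0 δ).eval x = b) ∧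
      (∀ (δ : Δ) (x : ℂ), (Q 0 δ).eval x = pp δ * x + qq δ) :=
    ⟨fun δ => (Q 0 δ).eval 1 - (Q 0 δ).eval 0, fun δ => (Q 0 δ).eval 0,
      fun δ x => (step5 δ).1 x, fun δ x => (step5 δ).2 x⟩
  -- Step 6 : qq is affine in the index
  have hq : ∀ β γ : Δ, qq (β+γ) = qq γ - φ β := by
    intro β γ
    by_contra hKne
    have hzero : ∀ m d : ℂ, (P β γ).eval m * d + (Q β γ).eval m = 0 := by
      intro m d
      have h := H 0 β γ 0 m d
      simp only [zero_add, add_zero, ZeroMemClass.coe_zero, hBc0, hP0, hQ0] at h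
      have hk : ((P β γ).eval m * d + (Q β γ).eval m) * (qq (β+γ) - qq γ + φ β) = 0 := by
        linear_combination -h
      rcases mul_eq_zero.mp hk with h1 | h2
      · exact h1
      · exact absurd (by linear_combination h2) hKne
    apply hne β γ
    constructor
    · exact stmtaux_polyzero (fun m => by linear_combination (hzero m 1) - (hzero m 0))
    · exact stmtaux_polyzero (fun m => by linear_combination hzero m 0)
  -- Step 7 : dichotomy
  have hdich : ∀ β γ : Δ,
      ((pp (β+γ) = pp γ + β) ∧ P β γ ≠ 0 ∧ ∀ x, (P β γ).eval x = (P β γ).eval 0)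
      ∨ (pp (β+γ) = pp γ + (β:ℂ) + b) := by
    intro β γ
    have hC0' : ∀ l m : ℂ, (((β:ℂ)+b)*l - b*m - φ β) * (Q β γ).eval (l+m)
        = (P β γ).eval m * l * (pp (β+γ)*l + qq (β+γ))
          + (Q β γ).eval m * ((pp (β+γ) - pp γ)*l - b*m - φ β) := by
      intro l m
      have h0 := H 0 β γ l m 0
      simp only [zero_add, add_zero, ZeroMemClass.coe_zero, hBc0, hP0, hQ0] at h0
      linear_combination h0 + (Q β γ).eval m * (hq β γ)
    rcases eq_or_ne (P β γ) 0 with hP | hP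
    · right
      have hQne : Q β γ ≠ 0 := fun hQ => hne β γ ⟨hP, hQ⟩
      have h := stmtaux_key1 (hβb β) hb0 hQne (fun l m => by
        have h2 := hC0' l m
        rw [hP] at h2
        simpa using h2)
      linear_combination h.1
    · left
      have hC1' : ∀ l m : ℂ, (((β:ℂ)+b)*l - b*m - φ β) * (P β γ).eval (l+m)
          = (P β γ).eval m * ((pp (β+γ) - pp γ + b)*l - b*m - φ β) := by
        intro l m
        have h1 := H 0 β γ l m 1
        have h0 := H 0 β γ l m 0
        simp only [zero_add, add_zero, ZeroMemClass.coe_zero, hBc0, hP0, hQ0] at h1 h0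
        linear_combination h1 - h0 + (P β γ).eval m * (hq β γ)
      have h := stmtaux_key1 (hβb β) hb0 hP hC1'
      exact ⟨by linear_combination h.1, hP, h.2⟩
  have hpadd : ∀ β γ : Δ, pp (β+γ) = pp γ + β := by
    intro β γ
    have h1 := hdich β γ
    have h2 := hdich (-β) (β+γ)
    rw [neg_add_cancel_left] at h2
    rcases h1 with ⟨h1, _⟩ | h1
    · exact h1
    · exfalso
      rcases h2 with ⟨h2, _⟩ | h2
      · push_cast at h2
        exact hb0 (by linear_combination -h1 - h2)
      · push_cast at h2
        have h3 : 2*b = 0 := by linear_combination -h1 - h2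
        exact hb0 (by linear_combination h3/2)
  have hPA : ∀ β γ : Δ, ∀ x : ℂ, (P β γ).eval x = (P β γ).eval 0 := by
    intro β γ
    rcases hdich β γ with ⟨_, _, h⟩ | h
    · exact h
    · exact absurd (by linear_combination (hpadd β γ) - h) hb0
  have hAne : ∀ β γ : Δ, (P β γ).eval 0 ≠ 0 := by
    intro β γ h0
    rcases hdich β γ with ⟨_, hP, hconst⟩ | h
    · exact hP (stmtaux_polyzero (fun x => by rw [hconst x, h0]))
    · exact hb0 (by linear_combination (hpadd β γ) - h)
  -- Step 8
  have step8 : ∀ β γ : Δ,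
      (∀ x, (Q β γ).eval x = ((Q β γ).eval 1 - (Q β γ).eval 0)*x + (Q β γ).eval 0) ∧
      ((β:ℂ)+b) * ((Q β γ).eval 1 - (Q β γ).eval 0) = (P β γ).eval 0 * pp (β+γ) ∧
      b * (Q β γ).eval 0 = (P β γ).eval 0 * qq (β+γ) + φ β * ((Q β γ).eval 1 - (Q β γ).eval 0) := by
    intro β γ
    apply stmtaux_step8core b (β:ℂ) (φ β) ((P β γ).eval 0) (pp (β+γ)) (qq (β+γ)) (hβb β)
    intro l
    have h0 := H 0 β γ l 0 0
    simp only [zero_add, add_zero, ZeroMemClass.coe_zero, hBc0, hP0, hQ0] at h0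
    linear_combination h0 + (Q β γ).eval 0 * l * (hpadd β γ) + (Q β γ).eval 0 * (hq β γ)
  obtain ⟨A, v1, v0, hFform, hAne', r1, r2⟩ : ∃ A v1 v0 : Δ → Δ → ℂ,
      (∀ (β γ : Δ) (l d : ℂ), ev2 (f β γ) l d = A β γ * d + v1 β γ * l + v0 β γ) ∧
      (∀ β γ : Δ, A β γ ≠ 0) ∧
      (∀ β γ : Δ, ((β:ℂ)+b) * v1 β γ = A β γ * pp (β+γ)) ∧
      (∀ β γ : Δ, b * v0 β γ = A β γ * qq (β+γ) + φ β * v1 β γ) := by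
    refine ⟨fun β γ => (P β γ).eval 0, fun β γ => (Q β γ).eval 1 - (Q β γ).eval 0,
      fun β γ => (Q β γ).eval 0, ?_, hAne, fun β γ => (step8 β γ).2.1,
      fun β γ => (step8 β γ).2.2⟩
    intro β γ l d
    rw [hPQ β γ l d, hPA β γ l, (step8 β γ).1 l]
    ring
  have H' : ∀ α β γ : Δ, ∀ l m d : ℂ,
      (((β : ℂ) + b) * l - ((α : ℂ) + b) * m + Bc b φ α β)
          * (A (α+β) γ * d + v1 (α+β) γ * (l+m) + v0 (α+β) γ)
        = (A β γ * (l+d) + v1 β γ * m + v0 β γ)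
            * (A α (β+γ) * d + v1 α (β+γ) * l + v0 α (β+γ))
          - (A α γ * (m+d) + v1 α γ * l + v0 α γ)
            * (A β (α+γ) * d + v1 β (α+γ) * m + v0 β (α+γ)) := by
    intro α β γ l m d
    have h := hf α β γ l m d
    simp only [hFform] at h
    exact h
  have hd2 : ∀ α β γ : Δ, A β γ * A α (β+γ) = A α γ * A β (α+γ) := by
    intro α β γ
    linear_combination -(H' α β γ 0 0 2 + H' α β γ 0 0 0 - 2*(H' α β γ 0 0 1))/2
  have hmain : ∀ α β γ : Δ,
      ((α:ℂ)+b)*((β:ℂ)+b) * A (α+β) γ = ((α:ℂ)+(β:ℂ)+b) * (A β γ * A α (β+γ)) := by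
    intro α β γ
    have hS : pp (α+(β+γ)) = pp (α+γ) + (β:ℂ) := by
      rw [add_left_comm]
      exact hpadd β (α+γ)
    linear_combination ((α:ℂ)+b)*(H' α β γ 1 0 1 - H' α β γ 1 0 0 - H' α β γ 0 0 1
        + H' α β γ 0 0 0)
      + A β γ * (r1 α (β+γ)) - A β (α+γ) * (r1 α γ)
      + pp (α+γ) * (hd2 α β γ) + (A β γ * A α (β+γ)) * hS
  refine ⟨qq 0 / b, pp 0 / b, A, hAne', ?_, ?_⟩
  · intro α β γ
    rw [div_mul_eq_mul_div, div_mul_eq_mul_div, eq_div_iff (mul_ne_zero (hβb α) (hβb β))]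
    linear_combination hmain α β γ
  · intro β γ l d
    have hpv : pp (β+γ) = pp 0 + ((β:ℂ) + (γ:ℂ)) := by
      have h2 := hpadd (β+γ) 0
      rw [add_zero] at h2
      push_cast at h2
      linear_combination h2
    have hqv : qq (β+γ) = qq 0 - φ (β+γ) := by
      have h2 := hq (β+γ) 0
      rwa [add_zero] at h2
    rw [hFform β γ l d]
    have hv1 : v1 β γ = A β γ * (pp 0 + ((β:ℂ)+(γ:ℂ))) / ((β:ℂ)+b) := by
      rw [eq_div_iff (hβb β)]
      linear_combination r1 β γ + A β γ * hpv
    have hv0 : v0 β γ = (A β γ * (qq 0 - φ (β+γ))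
        + φ β * (A β γ * (pp 0 + ((β:ℂ)+(γ:ℂ))) / ((β:ℂ)+b))) / b := by
      rw [eq_div_iff hb0, ← hv1]
      linear_combination r2 β γ + A β γ * hqv
    rw [hv0, hv1]
    have hbβ := hβb β
    rw [show (b/((β:ℂ)+b))*(pp 0/b + ((β:ℂ)+(γ:ℂ))/b) = (pp 0+((β:ℂ)+(γ:ℂ)))/((β:ℂ)+b) by
          rw [← add_div, div_mul_div_comm, mul_comm ((β:ℂ)+b) b,
            mul_div_mul_left _ _ hb0],
        show (φ β/((β:ℂ)+b))*(pp 0/b + ((β:ℂ)+(γ:ℂ))/b) = φ β*(pp 0+((β:ℂ)+(γ:ℂ)))/(((β:ℂ)+b)*b) by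
          rw [← add_div, div_mul_div_comm]]
    field_simp
    ring
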